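/- arXiv:1604.02682 — 4 statements merged into one kernel-verified Lean document; each statement's English description precedes it below -/
import Mathlib

section
/- Let A ∈ B(X), B ∈ B(Y,X) with R(A) + R(B) = X. Then X decomposes as X = (R(A)^⊥ ∔ R(B)^⊥) ⊕ (closure(R(A)) ∩ closure(R(B))), where ∔ denotes a direct (not necessarily orthogonal) sum: that is, R(A)^⊥ ∩ R(B)^⊥ = {0}, the sum R(A)^⊥ + R(B)^⊥ is closed, and its orthogonal complement equals closure(R(A)) ∩ closure(R(B)). -/
set_option synthInstance.maxHeartbeats 1000000
set_option maxHeartbeats 1000000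

local notation "⟪" x ", " y "⟫" => @inner ℂ _ _ x y

variable {X Y : Type*}
  [NormedAddCommGroup X] [InnerProductSpace ℂ X] [CompleteSpace X]
  [NormedAddCommGroup Y] [InnerProductSpace ℂ Y] [CompleteSpace Y]

theorem stmt_6 (A : X →L[ℂ] X) (B : Y →L[ℂ] X)
    (h : LinearMap.range (A : X →ₗ[ℂ] X) ⊔ LinearMap.range (B : Y →ₗ[ℂ] X) = ⊤) :
    (LinearMap.range (A : X →ₗ[ℂ] X))ᗮ ⊓ (LinearMap.range (B : Y →ₗ[ℂ] X))ᗮ = ⊥ ∧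
    IsClosed (((LinearMap.range (A : X →ₗ[ℂ] X))ᗮ ⊔ (LinearMap.range (B : Y →ₗ[ℂ] X))ᗮ : Submodule ℂ X) : Set X) ∧
    ((LinearMap.range (A : X →ₗ[ℂ] X))ᗮ ⊔ (LinearMap.range (B : Y →ₗ[ℂ] X))ᗮ)ᗮ =
      (LinearMap.range (A : X →ₗ[ℂ] X)).topologicalClosure ⊓ (LinearMap.range (B : Y →ₗ[ℂ] X)).topologicalClosure := by
  set M := LinearMap.range (A : X →ₗ[ℂ] X) with hM
  set N := LinearMap.range (B : Y →ₗ[ℂ] X) with hN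
  set Mc := M.topologicalClosure with hMcdef
  set Nc := N.topologicalClosure with hNcdef
  -- Part 1
  have h1 : Mᗮ ⊓ Nᗮ = ⊥ := by
    rw [Submodule.inf_orthogonal, h, Submodule.top_orthogonal_eq_bot]
  -- Part 3
  have h3 : (Mᗮ ⊔ Nᗮ)ᗮ = Mc ⊓ Nc := by
    rw [← Submodule.inf_orthogonal, Submodule.orthogonal_orthogonal_eq_closure,
      Submodule.orthogonal_orthogonal_eq_closure]
  -- orthogonals of closures
  have hMco : Mcᗮ = Mᗮ := by
    rw [hMcdef, ← Submodule.orthogonal_orthogonal_eq_closure,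
      Submodule.triorthogonal_eq_orthogonal]
  have hNco : Ncᗮ = Nᗮ := by
    rw [hNcdef, ← Submodule.orthogonal_orthogonal_eq_closure,
      Submodule.triorthogonal_eq_orthogonal]
  -- Part 2 : show Mᗮ ⊔ Nᗮ = (Mc ⊓ Nc)ᗮ
  set W := Mc ⊓ Nc with hWdef
  have hWclosed : IsClosed (W : Set X) :=
    M.isClosed_topologicalClosure.inter N.isClosed_topologicalClosure
  haveI : CompleteSpace W := hWclosed.completeSpace_coe
  have hWMc : W ≤ Mc := inf_le_left
  have hWNc : W ≤ Nc := inf_le_right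
  set M' := Wᗮ ⊓ Mc with hM'def
  have hMcW : W ⊔ M' = Mc := Submodule.sup_orthogonal_inf_of_hasOrthogonalProjection hWMc
  have hM'closed : IsClosed (M' : Set X) :=
    W.isClosed_orthogonal.inter M.isClosed_topologicalClosure
  have hNcclosed : IsClosed (Nc : Set X) := N.isClosed_topologicalClosure
  have hsupc : Mc ⊔ Nc = ⊤ := by
    rw [eq_top_iff, ← h]
    exact sup_le_sup M.le_topologicalClosure N.le_topologicalClosure
  have hcompl : IsCompl Nc M' := by
    constructor
    · rw [disjoint_iff, Submodule.eq_bot_iff]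
      intro x hx
      obtain ⟨hxN, hxM'⟩ := Submodule.mem_inf.1 hx
      obtain ⟨hxW', hxMc⟩ := Submodule.mem_inf.1 hxM' 
      have hxWm : x ∈ W := Submodule.mem_inf.2 ⟨hxMc, hxN⟩
      have := (Submodule.mem_orthogonal W x).1 hxW' x hxWm
      simpa [inner_self_eq_zero] using this
    · have hMcle : Mc ≤ Nc ⊔ M' := by
        rw [← hMcW]
        exact sup_le (le_trans hWNc le_sup_left) le_sup_right
      rw [codisjoint_iff, eq_top_iff, ← hsupc]
      exact sup_le hMcle le_sup_left
  -- the continuous projection onto Nc along M'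
  set Q : X →L[ℂ] X :=
    Nc.subtypeL.comp (Nc.linearProjOfClosedCompl M' hcompl hNcclosed hM'closed) with hQdef
  have hQleft : ∀ n ∈ Nc, Q n = n := by
    intro n hn
    have := Submodule.linearProjOfIsCompl_apply_left hcompl ⟨n, hn⟩
    simp only [hQdef, ContinuousLinearMap.comp_apply,
      Submodule.coe_continuous_linearProjOfClosedCompl']
    rw [this]
    rfl
  have hQright : ∀ m ∈ M', Q m = 0 := by
    intro m hm
    simp only [hQdef, ContinuousLinearMap.comp_apply,
      Submodule.coe_continuous_linearProjOfClosedCompl']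
    rw [Submodule.linearProjOfIsCompl_apply_right' hcompl hm]
    simp
  -- key inclusion
  have hkey : Wᗮ ≤ Mᗮ ⊔ Nᗮ := by
    intro z hz
    set u := ContinuousLinearMap.adjoint Q z with hu_def
    have hu : u ∈ Mᗮ := by
      rw [Submodule.mem_orthogonal]
      intro m hm
      have hmMc : m ∈ W ⊔ M' := by rw [hMcW]; exact M.le_topologicalClosure hm
      obtain ⟨w, hw, m', hm', rfl⟩ := Submodule.mem_sup.1 hmMc
      have hQwm : Q (w + m') = w := by
        rw [map_add, hQleft w (hWNc hw), hQright m' hm', add_zero]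
      calc ⟪w + m', u⟫ = ⟪Q (w + m'), z⟫ :=
            ContinuousLinearMap.adjoint_inner_right Q (w + m') z
        _ = ⟪w, z⟫ := by rw [hQwm]
        _ = 0 := (Submodule.mem_orthogonal W z).1 hz w hw
    have hv : z - u ∈ Nᗮ := by
      rw [Submodule.mem_orthogonal]
      intro n hn
      have hQn : Q n = n := hQleft n (N.le_topologicalClosure hn)
      have : ⟪n, u⟫ = ⟪n, z⟫ := by
        rw [hu_def, ContinuousLinearMap.adjoint_inner_right, hQn]
      rw [inner_sub_right, this, sub_self]
    have : u + (z - u) ∈ Mᗮ ⊔ Nᗮ := Submodule.add_mem_sup hu hv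
    simpa using this
  have h2eq : Mᗮ ⊔ Nᗮ = Wᗮ := by
    refine le_antisymm (sup_le ?_ ?_) hkey
    · rw [← hMco]; exact Submodule.orthogonal_le hWMc
    · rw [← hNco]; exact Submodule.orthogonal_le hWNc
  refine ⟨h1, ?_, h3⟩
  rw [h2eq]
  exact W.isClosed_orthogonal
end

section
/- Let Ω₁ and Ω₂ be closed subspaces of a Hilbert space X. Then Ω₁ + Ω₂ is closed if and only if Ω₁^⊥ + Ω₂^⊥ is closed. -/
set_option synthInstance.maxHeartbeats 1000000
set_option maxHeartbeats 1000000

variable {X Y : Type*}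
  [NormedAddCommGroup X] [InnerProductSpace ℂ X] [CompleteSpace X]
  [NormedAddCommGroup Y] [InnerProductSpace ℂ Y] [CompleteSpace Y]

open scoped InnerProductSpace

private lemma aux_closed_sup_orthogonal (M N : Submodule ℂ X)
    (hM : IsClosed (M : Set X)) (hN : IsClosed (N : Set X))
    (hS : IsClosed ((M ⊔ N : Submodule ℂ X) : Set X)) :
    IsClosed ((Mᗮ ⊔ Nᗮ : Submodule ℂ X) : Set X) := by
  haveI : CompleteSpace M := hM.completeSpace_coe
  haveI : CompleteSpace N := hN.completeSpace_coe
  set S : Submodule ℂ X := M ⊔ N with hSdef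
  haveI : CompleteSpace S := hS.completeSpace_coe
  -- the addition map T : M × N →ₗ S
  let Tl : (M × N) →ₗ[ℂ] S :=
    { toFun := fun p => ⟨(p.1 : X) + (p.2 : X),
        Submodule.add_mem_sup p.1.2 p.2.2⟩
      map_add' := by
        intro p q
        apply Subtype.ext
        simp [add_add_add_comm]
      map_smul' := by
        intro c p
        apply Subtype.ext
        simp [smul_add] }
  have Tl_apply : ∀ p : M × N, ((Tl p : S) : X) = (p.1 : X) + (p.2 : X) := fun p => rfl
  let T : (M × N) →L[ℂ] S := Tl.mkContinuous 2 (by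
    intro p
    have h1 : ‖(p.1 : X)‖ ≤ ‖p‖ := le_max_left _ _
    have h2 : ‖(p.2 : X)‖ ≤ ‖p‖ := le_max_right _ _
    calc ‖Tl p‖ = ‖(p.1 : X) + (p.2 : X)‖ := rfl
      _ ≤ ‖(p.1 : X)‖ + ‖(p.2 : X)‖ := norm_add_le _ _
      _ ≤ ‖p‖ + ‖p‖ := add_le_add h1 h2
      _ = 2 * ‖p‖ := by ring)
  have Tsurj : Function.Surjective T := by
    rintro ⟨s, hs⟩
    rcases Submodule.mem_sup.mp hs with ⟨m, hm, n, hn, rfl⟩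
    exact ⟨(⟨m, hm⟩, ⟨n, hn⟩), rfl⟩
  obtain ⟨C, Cpos, hC⟩ := ContinuousLinearMap.exists_preimage_norm_le T Tsurj
  -- it suffices to show Mᗮ ⊔ Nᗮ = (M ⊓ N)ᗮ
  have key : (Mᗮ ⊔ Nᗮ : Submodule ℂ X) = (M ⊓ N)ᗮ := by
    apply le_antisymm
    · refine sup_le ?_ ?_ <;> exact Submodule.orthogonal_le (by simp)
    · intro x hx
      -- the functional g : M × N → ℂ, g (m, n) = ⟪x, m⟫
      let g : (M × N) →ₗ[ℂ] ℂ :=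
        ((innerSL ℂ x).toLinearMap.comp M.subtype).comp (LinearMap.fst ℂ M N)
      have g_apply : ∀ p : M × N, g p = ⟪x, (p.1 : X)⟫_ℂ := fun p => rfl
      have hker : ∀ p : M × N, Tl p = 0 → g p = 0 := by
        intro p hp
        have h0 : (p.1 : X) + (p.2 : X) = 0 := by
          have := congrArg (Subtype.val) hp
          simpa [Tl_apply] using this
        have hmem : (p.1 : X) ∈ M ⊓ N := by
          constructor
          · exact p.1.2
          · have he : (p.1 : X) = -(p.2 : X) := by
              rw [eq_neg_iff_add_eq_zero]; exact h0
            rw [he]; exact neg_mem p.2.2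
        have h1 := (Submodule.mem_orthogonal _ x).mp hx _ hmem
        rw [g_apply, ← inner_conj_symm, h1, map_zero]
      -- get a linear right inverse σ of Tl
      have hrange : LinearMap.range Tl = ⊤ := by
        rw [LinearMap.range_eq_top]
        exact Tsurj
      obtain ⟨σ, hσ⟩ := Tl.exists_rightInverse_of_surjective hrange
      have hσ' : ∀ s : S, Tl (σ s) = s := fun s => LinearMap.congr_fun hσ s
      -- factored functional
      let fl : S →ₗ[ℂ] ℂ := g.comp σ
      have hfT : ∀ p : M × N, fl (Tl p) = g p := by
        intro p
        have h0 : g (σ (Tl p) - p) = 0 := by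
          apply hker
          rw [map_sub, hσ' (Tl p), sub_self]
        rw [map_sub, sub_eq_zero] at h0
        exact h0
      -- fl is bounded
      have flbound : ∀ s : S, ‖fl s‖ ≤ (C * ‖x‖) * ‖s‖ := by
        intro s
        obtain ⟨p, hp, hpn⟩ := hC s
        have hTp : Tl p = s := hp
        calc ‖fl s‖ = ‖g p‖ := by rw [← hTp, hfT]
          _ = ‖⟪x, (p.1 : X)⟫_ℂ‖ := by rw [g_apply]
          _ ≤ ‖x‖ * ‖(p.1 : X)‖ := norm_inner_le_norm _ _
          _ ≤ ‖x‖ * ‖p‖ := by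
              exact mul_le_mul_of_nonneg_left (le_max_left _ _) (norm_nonneg _)
          _ ≤ ‖x‖ * (C * ‖s‖) := by
              exact mul_le_mul_of_nonneg_left hpn (norm_nonneg _)
          _ = (C * ‖x‖) * ‖s‖ := by ring
      let f : S →L[ℂ] ℂ := fl.mkContinuous (C * ‖x‖) flbound
      have f_apply : ∀ s : S, f s = fl s := fun s => rfl
      -- extend to all of X via the orthogonal projection onto S
      let F : X →L[ℂ] ℂ := f.comp (S.orthogonalProjectionOnto : X →L[ℂ] S)
      -- Riesz representation
      let z : X := (InnerProductSpace.toDual ℂ X).symm F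
      have hz : ∀ y : X, ⟪z, y⟫_ℂ = F y := fun y =>
        InnerProductSpace.toDual_symm_apply
      -- F agrees with the expected values on M and on N
      have hFm : ∀ m : X, ∀ hm : m ∈ M, F m = ⟪x, m⟫_ℂ := by
        intro m hm
        have hmS : m ∈ S := Submodule.mem_sup_left hm
        have hproj : S.orthogonalProjectionOnto m = ⟨m, hmS⟩ :=
          S.orthogonalProjectionOnto_mem_subspace_eq_self ⟨m, hmS⟩
        have hT : Tl (⟨m, hm⟩, 0) = ⟨m, hmS⟩ := by
          apply Subtype.ext
          simp [Tl_apply]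
        calc F m = f ⟨m, hmS⟩ := by rw [ContinuousLinearMap.comp_apply, hproj]
          _ = fl (Tl (⟨m, hm⟩, 0)) := by rw [f_apply, hT]
          _ = g (⟨m, hm⟩, 0) := hfT _
          _ = ⟪x, m⟫_ℂ := rfl
      have hFn : ∀ n : X, ∀ hn : n ∈ N, F n = 0 := by
        intro n hn
        have hnS : n ∈ S := Submodule.mem_sup_right hn
        have hproj : S.orthogonalProjectionOnto n = ⟨n, hnS⟩ :=
          S.orthogonalProjectionOnto_mem_subspace_eq_self ⟨n, hnS⟩
        have hT : Tl (0, ⟨n, hn⟩) = ⟨n, hnS⟩ := by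
          apply Subtype.ext
          simp [Tl_apply]
        calc F n = f ⟨n, hnS⟩ := by rw [ContinuousLinearMap.comp_apply, hproj]
          _ = fl (Tl (0, ⟨n, hn⟩)) := by rw [f_apply, hT]
          _ = g (0, ⟨n, hn⟩) := hfT _
          _ = ⟪x, ((0 : M) : X)⟫_ℂ := rfl
          _ = 0 := by simp
      -- conclude: x - z ∈ Mᗮ and z ∈ Nᗮ
      have hxz : x - z ∈ Mᗮ := by
        rw [Submodule.mem_orthogonal']
        intro m hm
        rw [inner_sub_left]
        have h1 : ⟪z, m⟫_ℂ = ⟪x, m⟫_ℂ := by rw [hz, hFm m hm]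
        have h2 : ⟪x - z, m⟫_ℂ = ⟪x, m⟫_ℂ - ⟪z, m⟫_ℂ := inner_sub_left _ _ _
        rw [← inner_sub_left, h2, h1, sub_self]
      have hzN : z ∈ Nᗮ := by
        rw [Submodule.mem_orthogonal']
        intro n hn
        rw [hz, hFn n hn]
      have : x = (x - z) + z := (sub_add_cancel x z).symm
      rw [this]
      exact Submodule.add_mem_sup hxz hzN
  rw [key]
  exact Submodule.isClosed_orthogonal _

theorem stmt_7 (Ω₁ Ω₂ : Submodule ℂ X) (h₁ : IsClosed (Ω₁ : Set X)) (h₂ : IsClosed (Ω₂ : Set X)) :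
    IsClosed ((Ω₁ ⊔ Ω₂ : Submodule ℂ X) : Set X) ↔
      IsClosed ((Ω₁ᗮ ⊔ Ω₂ᗮ : Submodule ℂ X) : Set X) := by
  constructor
  · exact aux_closed_sup_orthogonal Ω₁ Ω₂ h₁ h₂
  · intro h
    haveI : CompleteSpace Ω₁ := h₁.completeSpace_coe
    haveI : CompleteSpace Ω₂ := h₂.completeSpace_coe
    have := aux_closed_sup_orthogonal Ω₁ᗮ Ω₂ᗮ
      (Submodule.isClosed_orthogonal _) (Submodule.isClosed_orthogonal _) h
    rwa [Submodule.orthogonal_orthogonal, Submodule.orthogonal_orthogonal] at this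
end

section
/- Let Ω₁ and Ω₂ be closed subspaces of a Hilbert space X. Then Ω₁ + Ω₂ is closed if and only if (Ω₁ ∩ Ω₂)^⊥ = Ω₁^⊥ + Ω₂^⊥. -/
set_option synthInstance.maxHeartbeats 1000000
set_option maxHeartbeats 1000000

variable {X Y : Type*}
  [NormedAddCommGroup X] [InnerProductSpace ℂ X] [CompleteSpace X]
  [NormedAddCommGroup Y] [InnerProductSpace ℂ Y] [CompleteSpace Y]

open Submodule in
/-- Key lemma: if `M`, `N` and `M ⊔ N` are closed, then `(M ⊓ N)ᗮ ≤ Mᗮ ⊔ Nᗮ`. -/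
theorem key_lemma (M N : Submodule ℂ X) (hM : IsClosed (M : Set X))
    (hN : IsClosed (N : Set X))
    (hsum : IsClosed ((M ⊔ N : Submodule ℂ X) : Set X)) :
    (M ⊓ N)ᗮ ≤ Mᗮ ⊔ Nᗮ := by
  intro x hx
  set H : Submodule ℂ X := M ⊔ N with hH
  haveI : CompleteSpace H := hsum.completeSpace_coe
  haveI : CompleteSpace M := hM.completeSpace_coe
  haveI : CompleteSpace N := hN.completeSpace_coe
  -- The bounded surjection `A : M × N → H`, `(m, n) ↦ m + n`.
  let A₀ : (↥M × ↥N) →ₗ[ℂ] ↥H :=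
    { toFun := fun p => ⟨(p.1 : X) + (p.2 : X),
        H.add_mem (Submodule.mem_sup_left p.1.2) (Submodule.mem_sup_right p.2.2)⟩
      map_add' := by intro p q; apply Subtype.ext; simp; abel
      map_smul' := by intro c p; apply Subtype.ext; simp [smul_add] }
  have hA₀ : ∀ p : ↥M × ↥N, ((A₀ p : X)) = (p.1 : X) + (p.2 : X) := fun p => rfl
  have hA₀cont : Continuous A₀ := by
    apply Continuous.subtype_mk
    exact ((continuous_subtype_val.comp continuous_fst).add
      (continuous_subtype_val.comp continuous_snd))
  let A : (↥M × ↥N) →L[ℂ] ↥H := ⟨A₀, hA₀cont⟩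
  have hAsurj : Function.Surjective A := by
    rintro ⟨z, hz⟩
    rw [hH] at hz
    obtain ⟨m, hm, n, hn, hmn⟩ := Submodule.mem_sup.1 hz
    exact ⟨(⟨m, hm⟩, ⟨n, hn⟩), Subtype.ext (by exact hmn)⟩
  -- The functional `g (m, n) = ⟪x, m⟫`.
  let g : (↥M × ↥N) →L[ℂ] ℂ :=
    (innerSL ℂ x).comp (M.subtypeL.comp (ContinuousLinearMap.fst ℂ ↥M ↥N))
  have hg : ∀ p : ↥M × ↥N, g p = inner ℂ x (p.1 : X) := fun p => rfl
  -- `g` factors through `A`.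
  have hker : ∀ p q : ↥M × ↥N, A p = A q → g p = g q := by
    intro p q hpq
    have h1 : (p.1 : X) + (p.2 : X) = (q.1 : X) + (q.2 : X) := by
      have h' := Subtype.ext_iff.1 hpq
      rw [show ((A p : X)) = (p.1 : X) + (p.2 : X) from rfl,
        show ((A q : X)) = (q.1 : X) + (q.2 : X) from rfl] at h'
      exact h' 
    have hd : ((p.1 : X) - (q.1 : X)) ∈ M ⊓ N := by
      constructor
      · exact M.sub_mem p.1.2 q.1.2
      · have : (p.1 : X) - (q.1 : X) = (q.2 : X) - (p.2 : X) :=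
          sub_eq_sub_iff_add_eq_add.mpr (by rw [h1, add_comm])
        rw [this]; exact N.sub_mem q.2.2 p.2.2
    have h0 : inner ℂ x ((p.1 : X) - (q.1 : X)) = (0 : ℂ) :=
      (Submodule.mem_orthogonal' _ x).1 hx _ hd
    rw [hg, hg]
    rw [inner_sub_right] at h0
    linear_combination h0
  -- choose preimages
  have hpre : ∀ z : ↥H, ∃ p, A p = z := hAsurj
  choose pre hpre' using hpre
  -- the factored linear functional
  let f₀ : ↥H →ₗ[ℂ] ℂ :=
    { toFun := fun z => g (pre z)
      map_add' := by
        intro z w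
        show g (pre (z + w)) = g (pre z) + g (pre w)
        have : A (pre (z + w)) = A (pre z + pre w) := by
          rw [hpre', map_add, hpre', hpre']
        rw [hker _ _ this, map_add]
      map_smul' := by
        intro c z
        show g (pre (c • z)) = (RingHom.id ℂ) c • g (pre z)
        have : A (pre (c • z)) = A (c • pre z) := by
          rw [hpre', map_smul, hpre']
        rw [hker _ _ this, map_smul]
        rfl }
  obtain ⟨C, hC0, hC⟩ := ContinuousLinearMap.exists_preimage_norm_le A hAsurj
  have hbound : ∃ c, ∀ z : ↥H, ‖f₀ z‖ ≤ c * ‖z‖ := by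
    refine ⟨‖g‖ * C, fun z => ?_⟩
    obtain ⟨p, hp, hpnorm⟩ := hC z
    have : f₀ z = g p := hker _ _ (by rw [hpre', hp])
    rw [this]
    calc ‖g p‖ ≤ ‖g‖ * ‖p‖ := g.le_opNorm p
      _ ≤ ‖g‖ * (C * ‖z‖) := by
          exact mul_le_mul_of_nonneg_left hpnorm (norm_nonneg g)
      _ = ‖g‖ * C * ‖z‖ := by ring
  let f : ↥H →L[ℂ] ℂ := f₀.mkContinuousOfExistsBound hbound
  -- Riesz representation
  set y' : ↥H := (InnerProductSpace.toDual ℂ ↥H).symm f with hy'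
  have hy'app : ∀ z : ↥H, (inner ℂ y' z : ℂ) = f z := fun z =>
    InnerProductSpace.toDual_symm_apply
  set y : X := (y' : X) with hy
  -- `y ∈ Nᗮ`
  have hyN : y ∈ Nᗮ := by
    rw [Submodule.mem_orthogonal']
    intro n hn
    have hnH : n ∈ H := Submodule.mem_sup_right hn
    have hfn : f ⟨n, hnH⟩ = 0 := by
      have hA : A (0, ⟨n, hn⟩) = ⟨n, hnH⟩ := Subtype.ext (by show ((0:↥M):X) + ((⟨n, hn⟩:↥N):X) = n; simp)
      have : f₀ ⟨n, hnH⟩ = g (0, ⟨n, hn⟩) := hker _ _ (by rw [hpre', hA])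
      have hg0 : g ((0 : ↥M), (⟨n, hn⟩ : ↥N)) = 0 := by
        rw [hg]; simp
      simpa [f, hg0] using this
    have := hy'app ⟨n, hnH⟩
    rw [hfn] at this
    have hcoe : (inner ℂ y' (⟨n, hnH⟩ : ↥H) : ℂ) = inner ℂ y n := rfl
    rw [hcoe] at this
    exact this
  -- `x - y ∈ Mᗮ`
  have hxyM : x - y ∈ Mᗮ := by
    rw [Submodule.mem_orthogonal']
    intro m hm
    have hmH : m ∈ H := Submodule.mem_sup_left hm
    have hfm : f ⟨m, hmH⟩ = inner ℂ x m := by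
      have hA : A (⟨m, hm⟩, 0) = ⟨m, hmH⟩ := Subtype.ext (by show ((⟨m, hm⟩:↥M):X) + ((0:↥N):X) = m; simp)
      have : f₀ ⟨m, hmH⟩ = g (⟨m, hm⟩, 0) := hker _ _ (by rw [hpre', hA])
      simpa [f, hg] using this
    have := hy'app ⟨m, hmH⟩
    rw [hfm] at this
    have hcoe : (inner ℂ y' (⟨m, hmH⟩ : ↥H) : ℂ) = inner ℂ y m := rfl
    rw [hcoe] at this
    rw [inner_sub_left, this, sub_self]
  have : x = (x - y) + y := by abel
  rw [this]
  exact Submodule.add_mem _ (Submodule.mem_sup_left hxyM) (Submodule.mem_sup_right hyN)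

theorem stmt_8 (Ω₁ Ω₂ : Submodule ℂ X) (h₁ : IsClosed (Ω₁ : Set X)) (h₂ : IsClosed (Ω₂ : Set X)) :
    IsClosed ((Ω₁ ⊔ Ω₂ : Submodule ℂ X) : Set X) ↔ (Ω₁ ⊓ Ω₂)ᗮ = Ω₁ᗮ ⊔ Ω₂ᗮ := by
  haveI : CompleteSpace Ω₁ := h₁.completeSpace_coe
  haveI : CompleteSpace Ω₂ := h₂.completeSpace_coe
  constructor
  · intro hsum
    refine le_antisymm (key_lemma Ω₁ Ω₂ h₁ h₂ hsum) (sup_le ?_ ?_)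
    · exact Submodule.orthogonal_le inf_le_left
    · exact Submodule.orthogonal_le inf_le_right
  · intro heq
    have hclosed : IsClosed ((Ω₁ᗮ ⊔ Ω₂ᗮ : Submodule ℂ X) : Set X) := by
      rw [← heq]; exact Submodule.isClosed_orthogonal _
    have hkey := key_lemma Ω₁ᗮ Ω₂ᗮ (Submodule.isClosed_orthogonal _)
      (Submodule.isClosed_orthogonal _) hclosed
    rw [Submodule.orthogonal_orthogonal, Submodule.orthogonal_orthogonal,
      Submodule.inf_orthogonal] at hkey
    have hcl : (Ω₁ ⊔ Ω₂).topologicalClosure = Ω₁ ⊔ Ω₂ := by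
      rw [← Submodule.orthogonal_orthogonal_eq_closure]
      exact le_antisymm hkey (Submodule.le_orthogonal_orthogonal _)
    rw [← hcl]
    exact Submodule.isClosed_topologicalClosure _
end

section
/- Let A ∈ B(X), B ∈ B(Y,X), C ∈ B(X,Y), D ∈ B(Y). If Y ≠ {0} and the kernel of the row operator (A B) is trivial, then the operator matrix M = [[A, B],[C, D]] : X ⊕ Y → X ⊕ Y is not an isomorphism. -/
set_option synthInstance.maxHeartbeats 1000000
set_option maxHeartbeats 1000000

variable {X Y : Type*}
  [NormedAddCommGroup X] [InnerProductSpace ℂ X] [CompleteSpace X]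
  [NormedAddCommGroup Y] [InnerProductSpace ℂ Y] [CompleteSpace Y]

theorem stmt_16 (A : X →L[ℂ] X) (B : Y →L[ℂ] X) (C : X →L[ℂ] Y) (D : Y →L[ℂ] Y)
    (hY : ∃ y : Y, y ≠ 0) (hker : LinearMap.ker ((A.coprod B : X × Y →L[ℂ] X) : X × Y →ₗ[ℂ] X) = ⊥) :
    ¬∃ e : (X × Y) ≃L[ℂ] (X × Y),
        (e : X × Y →L[ℂ] X × Y) = (A.coprod B).prod (C.coprod D) := by
  rintro ⟨e, he⟩
  obtain ⟨y, hy⟩ := hY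
  set p := e.symm (0, y) with hp
  have hep : e p = (0, y) := e.apply_symm_apply _
  have hval : ((A.coprod B).prod (C.coprod D)) p = (0, y) := by
    rw [← he]; exact hep
  have h1 : (A.coprod B) p = 0 := congrArg Prod.fst hval
  have hp0 : p = 0 := by
    have : p ∈ LinearMap.ker ((A.coprod B : X × Y →L[ℂ] X) : X × Y →ₗ[ℂ] X) := LinearMap.mem_ker.mpr h1
    rwa [hker, Submodule.mem_bot] at this
  rw [hp0, map_zero] at hep
  exact hy (congrArg Prod.snd hep).symm
end
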